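/- Under the assumption that n sample points in ℝ^d (n ≥ d+1) are in general position, the maximal sample Tukey depth is at most ⌈n/2⌉/n. -/

import Mathlib

open scoped RealInnerProductSpace

def IsClosedHalfspace {d : ℕ} (H : Set (EuclideanSpace ℝ (Fin d))) : Prop :=
  ∃ (u : EuclideanSpace ℝ (Fin d)) (c : ℝ), u ≠ 0 ∧ H = {y | c ≤ ⟪u, y⟫}

lemma euclidean_single_ne_zero {d : ℕ} (i : Fin d) :
    (EuclideanSpace.single i (1 : ℝ)) ≠ 0 := by
  intro h
  have := congrFun (congrArg (fun z : EuclideanSpace ℝ (Fin d) => (z : Fin d → ℝ)) h) i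
  simp at this

/-- Any set of at most `d` points in `ℝ^d` lies on a hyperplane. -/
lemma exists_hyperplane {d : ℕ} (hd : 0 < d) (t : Finset (EuclideanSpace ℝ (Fin d)))
    (ht : t.card ≤ d) :
    ∃ (u : EuclideanSpace ℝ (Fin d)) (c : ℝ), u ≠ 0 ∧ ∀ p ∈ t, ⟪u, p⟫ = c := by
  classical
  rcases t.eq_empty_or_nonempty with rfl | ⟨p₀, hp₀⟩
  · exact ⟨EuclideanSpace.single ⟨0, hd⟩ 1, 0, euclidean_single_ne_zero _, by simp⟩
  · set V : Submodule ℝ (EuclideanSpace ℝ (Fin d)) :=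
      Submodule.span ℝ (((t.erase p₀).image (· - p₀) : Finset _) : Set _) with hVdef
    have hV : V ≠ ⊤ := by
      intro h
      have h1 : Module.finrank ℝ V ≤ ((t.erase p₀).image (· - p₀)).card :=
        finrank_span_finset_le_card _
      have h2 : ((t.erase p₀).image (· - p₀)).card ≤ (t.erase p₀).card :=
        Finset.card_image_le
      have h3 : (t.erase p₀).card = t.card - 1 := Finset.card_erase_of_mem hp₀
      have h4 : Module.finrank ℝ V = d := by
        rw [h, finrank_top, finrank_euclideanSpace_fin]
      have h5 : 1 ≤ t.card := Finset.card_pos.mpr ⟨p₀, hp₀⟩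
      omega
    have hVo : Vᗮ ≠ ⊥ := fun h => hV (Submodule.orthogonal_eq_bot_iff.mp h)
    obtain ⟨u, huV, hu0⟩ := (Submodule.ne_bot_iff _).mp hVo
    refine ⟨u, ⟪u, p₀⟫, hu0, ?_⟩
    intro p hp
    by_cases hpp : p = p₀
    · rw [hpp]
    · have hmem : p - p₀ ∈ V := Submodule.subset_span (by
        simp only [Finset.coe_image, Set.mem_image, Finset.mem_coe, Finset.mem_erase]
        exact ⟨p, ⟨hpp, hp⟩, rfl⟩)
      have h0 : ⟪u, p - p₀⟫ = 0 := by
        rw [real_inner_comm]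
        exact (Submodule.mem_orthogonal V u).mp huV _ hmem
      rw [inner_sub_right] at h0
      linarith

theorem max_depth_le_half_general_position (d n : ℕ) (hd : 0 < d) (hn : d + 1 ≤ n)
    (x : Fin n → EuclideanSpace ℝ (Fin d))
    (hgp : ∀ s : Finset (Fin n), s.card = d + 1 →
      ¬ ∃ (u : EuclideanSpace ℝ (Fin d)) (c : ℝ), u ≠ 0 ∧ ∀ i ∈ s, ⟪u, x i⟫ = c)
    (y : EuclideanSpace ℝ (Fin d)) :
    sInf {r : ℝ | ∃ H : Set (EuclideanSpace ℝ (Fin d)),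
        IsClosedHalfspace H ∧ y ∈ H ∧ r = ({i : Fin n | x i ∈ H}.ncard : ℝ) / n} ≤
      ((⌈(n : ℝ) / 2⌉ : ℤ) : ℝ) / n := by
  classical
  have hn0 : 0 < n := by omega
  -- the sample points are pairwise distinct
  have hinj : Function.Injective x := by
    intro i j hij
    by_contra hne
    obtain ⟨s, hsub, hcard⟩ := Finset.exists_superset_card_eq
      (s := ({i, j} : Finset (Fin n))) (n := d + 1) (by
        have h2 : ({i, j} : Finset (Fin n)).card ≤ ({j} : Finset (Fin n)).card + 1 :=
          Finset.card_insert_le _ _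
        simp at h2; omega)
      (by simpa using hn)
    apply hgp s hcard
    have himg : s.image x = (s.erase i).image x := by
      apply Finset.Subset.antisymm
      · intro p hp
        simp only [Finset.mem_image, Finset.mem_erase] at hp ⊢
        obtain ⟨k, hk, rfl⟩ := hp
        by_cases hki : k = i
        · exact ⟨j, ⟨fun h => hne h.symm, hsub (by simp)⟩, by rw [hki, hij]⟩
        · exact ⟨k, ⟨hki, hk⟩, rfl⟩
      · exact Finset.image_subset_image (Finset.erase_subset _ _)
    have hcardle : (s.image x).card ≤ d := by
      rw [himg]
      calc ((s.erase i).image x).card ≤ (s.erase i).card := Finset.card_image_le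
        _ = s.card - 1 := Finset.card_erase_of_mem (hsub (by simp))
        _ ≤ d := by omega
    obtain ⟨u, c, hu, hc⟩ := exists_hyperplane hd (s.image x) hcardle
    exact ⟨u, c, hu, fun k hk => hc _ (Finset.mem_image_of_mem x hk)⟩
  -- choose a direction u avoiding all points other than (possibly) y itself
  obtain ⟨u, hu0, hu⟩ : ∃ u : EuclideanSpace ℝ (Fin d), u ≠ 0 ∧
      ∀ i : Fin n, x i ≠ y → ⟪u, x i - y⟫ ≠ 0 := by
    set p : Option {i : Fin n // x i ≠ y} → Subspace ℝ (EuclideanSpace ℝ (Fin d)) :=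
      fun o => o.elim ⊥ (fun i => (Submodule.span ℝ {x i.1 - y})ᗮ) with hp
    have hcov : (⋃ o, (p o : Set (EuclideanSpace ℝ (Fin d)))) ≠ Set.univ := by
      intro h
      obtain ⟨o, ho⟩ := Subspace.exists_eq_top_of_iUnion_eq_univ h
      match o with
      | none =>
        have h2 : (EuclideanSpace.single ⟨0, hd⟩ (1 : ℝ)) ∈
            (⊥ : Subspace ℝ (EuclideanSpace ℝ (Fin d))) := by
          rw [show (⊥ : Subspace ℝ (EuclideanSpace ℝ (Fin d))) = p none from rfl, ho]
          trivial
        exact euclidean_single_ne_zero (⟨0, hd⟩ : Fin d) (by simpa using h2)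
      | some i =>
        have h2 : x i.1 - y ∈ (Submodule.span ℝ {x i.1 - y})ᗮ := by
          rw [show (Submodule.span ℝ {x i.1 - y})ᗮ = p (some i) from rfl, ho]
          trivial
        have h3 := Submodule.mem_orthogonal_singleton_iff_inner_left.mp h2
        exact i.2 (sub_eq_zero.mp (inner_self_eq_zero.mp h3))
    obtain ⟨u, hu⟩ := Set.ne_univ_iff_exists_notMem _ |>.mp hcov
    rw [Set.mem_iUnion] at hu
    push_neg at hu
    refine ⟨u, ?_, ?_⟩
    · intro h
      exact hu none (by simp [hp, h])
    · intro i hi hinner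
      exact hu (some ⟨i, hi⟩)
        (Submodule.mem_orthogonal_singleton_iff_inner_left.mpr hinner)
  set c : ℝ := ⟪u, y⟫ with hc
  set A : Finset (Fin n) := Finset.univ.filter (fun i => ⟪u, y⟫ ≤ ⟪u, x i⟫) with hA
  set B : Finset (Fin n) := Finset.univ.filter (fun i => ⟪-u, y⟫ ≤ ⟪-u, x i⟫) with hB
  have hAB_union : A ∪ B = Finset.univ := by
    ext i
    simp only [hA, hB, Finset.mem_union, Finset.mem_filter, Finset.mem_univ, true_and,
      iff_true, inner_neg_left, neg_le_neg_iff]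
    exact le_total _ _
  have hAB_inter : (A ∩ B).card ≤ 1 := by
    have hsub : ∀ i ∈ A ∩ B, x i = y := by
      intro i hi
      simp only [hA, hB, Finset.mem_inter, Finset.mem_filter, Finset.mem_univ, true_and,
        inner_neg_left, neg_le_neg_iff] at hi
      by_contra hne
      apply hu i hne
      rw [inner_sub_right]
      linarith [hi.1, hi.2]
    exact Finset.card_le_one.mpr fun a ha b hb => hinj ((hsub a ha).trans (hsub b hb).symm)
  have hsum : A.card + B.card ≤ n + 1 := by
    have := Finset.card_union_add_card_inter A B
    rw [hAB_union, Finset.card_univ, Fintype.card_fin] at this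
    omega
  -- a general step: a halfspace through y with small count bounds the infimum
  have step : ∀ v : EuclideanSpace ℝ (Fin d), v ≠ 0 →
      2 * (Finset.univ.filter (fun i => ⟪v, y⟫ ≤ ⟪v, x i⟫)).card ≤ n + 1 →
      sInf {r : ℝ | ∃ H : Set (EuclideanSpace ℝ (Fin d)),
        IsClosedHalfspace H ∧ y ∈ H ∧ r = ({i : Fin n | x i ∈ H}.ncard : ℝ) / n} ≤
      ((⌈(n : ℝ) / 2⌉ : ℤ) : ℝ) / n := by
    intro v hv hcard
    set H : Set (EuclideanSpace ℝ (Fin d)) := {z | ⟪v, y⟫ ≤ ⟪v, z⟫} with hH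
    have hbdd : BddBelow {r : ℝ | ∃ H : Set (EuclideanSpace ℝ (Fin d)),
        IsClosedHalfspace H ∧ y ∈ H ∧ r = ({i : Fin n | x i ∈ H}.ncard : ℝ) / n} := by
      refine ⟨0, fun r hr => ?_⟩
      obtain ⟨H', _, _, hr⟩ := hr
      rw [hr]
      positivity
    have hmem : (({i : Fin n | x i ∈ H}.ncard : ℝ) / n) ∈
        {r : ℝ | ∃ H : Set (EuclideanSpace ℝ (Fin d)),
        IsClosedHalfspace H ∧ y ∈ H ∧ r = ({i : Fin n | x i ∈ H}.ncard : ℝ) / n} :=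
      ⟨H, ⟨v, ⟪v, y⟫, hv, rfl⟩, by simp [hH], rfl⟩
    refine csInf_le_of_le hbdd hmem ?_
    have hncard : {i : Fin n | x i ∈ H}.ncard
        = (Finset.univ.filter (fun i => ⟪v, y⟫ ≤ ⟪v, x i⟫)).card := by
      rw [← Set.ncard_coe_finset]
      congr 1
      ext i
      simp [hH]
    have hceil : (({i : Fin n | x i ∈ H}.ncard : ℤ)) ≤ ⌈(n : ℝ) / 2⌉ := by
      have h1 : (({i : Fin n | x i ∈ H}.ncard : ℤ)) - 1 < ⌈(n : ℝ) / 2⌉ := by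
        refine Int.lt_ceil.mpr ?_
        have h2 : 2 * ({i : Fin n | x i ∈ H}.ncard : ℝ) ≤ n + 1 := by
          rw [hncard]
          exact_mod_cast hcard
        push_cast
        linarith
      omega
    have hceilR : (({i : Fin n | x i ∈ H}.ncard : ℝ)) ≤ ((⌈(n : ℝ) / 2⌉ : ℤ) : ℝ) := by
      exact_mod_cast hceil
    gcongr
  rcases le_total A.card B.card with h | h
  · refine step u hu0 ?_
    change 2 * A.card ≤ n + 1
    change A.card ≤ B.card at h
    omega
  · refine step (-u) (neg_ne_zero.mpr hu0) ?_
    change 2 * B.card ≤ n + 1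
    change B.card ≤ A.card at h
    omega
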